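/- Under conditional independence of the variables given Y, the information-theoretic diversity 𝓘(U_S | Y) − 𝓘(U_S) equals −𝓘(U_S), and the set function S ↦ −𝓘(U_S) is submodular. -/

import Mathlib

open Finset

/-- Probability mass of the event `X = x` under a pmf `p` on a finite sample space. -/
noncomputable def pmassOf {Ω : Type*} [Fintype Ω] {γ : Type*} [DecidableEq γ]
    (p : Ω → ℝ) (X : Ω → γ) (x : γ) : ℝ :=
  ∑ ω, if X ω = x then p ω else 0

/-- Shannon entropy of a discrete random variable. -/
noncomputable def entOf {Ω : Type*} [Fintype Ω] {γ : Type*} [Fintype γ] [DecidableEq γ]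
    (p : Ω → ℝ) (X : Ω → γ) : ℝ :=
  -∑ x, pmassOf p X x * Real.log (pmassOf p X x)

/-- Conditional Shannon entropy H(X|Y) = H(X,Y) - H(Y). -/
noncomputable def condEntOf {Ω : Type*} [Fintype Ω] {γ δ : Type*}
    [Fintype γ] [DecidableEq γ] [Fintype δ] [DecidableEq δ]
    (p : Ω → ℝ) (X : Ω → γ) (Y : Ω → δ) : ℝ :=
  entOf p (fun ω => (X ω, Y ω)) - entOf p Y

/-- Mutual information I(X;Y) = H(X) + H(Y) - H(X,Y). -/
noncomputable def miOf {Ω : Type*} [Fintype Ω] {γ δ : Type*}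
    [Fintype γ] [DecidableEq γ] [Fintype δ] [DecidableEq δ]
    (p : Ω → ℝ) (X : Ω → γ) (Y : Ω → δ) : ℝ :=
  entOf p X + entOf p Y - entOf p (fun ω => (X ω, Y ω))

/-- Conditional mutual information I(X;Y|Z) = H(X|Z) + H(Y|Z) - H(X,Y|Z). -/
noncomputable def cmiOf {Ω : Type*} [Fintype Ω] {γ δ ε : Type*}
    [Fintype γ] [DecidableEq γ] [Fintype δ] [DecidableEq δ] [Fintype ε] [DecidableEq ε]
    (p : Ω → ℝ) (X : Ω → γ) (Y : Ω → δ) (Z : Ω → ε) : ℝ :=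
  condEntOf p X Z + condEntOf p Y Z - condEntOf p (fun ω => (X ω, Y ω)) Z

/-- Joint random variable of a finite family. -/
def jointFin {Ω : Type*} {γ : Type*} {k : ℕ} (U : Fin k → Ω → γ) : Ω → (Fin k → γ) :=
  fun ω i => U i ω

/-- Total correlation (multi-information) 𝓘(U₁,...,U_k) = ∑ H(Uᵢ) − H(U₁,...,U_k). -/
noncomputable def totalCorrFin {Ω : Type*} [Fintype Ω] {γ : Type*} [Fintype γ] [DecidableEq γ]
    {k : ℕ} (p : Ω → ℝ) (U : Fin k → Ω → γ) : ℝ :=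
  (∑ i, entOf p (U i)) - entOf p (jointFin U)

/-- Conditional total correlation 𝓘(U₁,...,U_k | Y) = ∑ H(Uᵢ|Y) − H(U₁,...,U_k|Y). -/
noncomputable def condTotalCorrFin {Ω : Type*} [Fintype Ω] {γ δ : Type*}
    [Fintype γ] [DecidableEq γ] [Fintype δ] [DecidableEq δ]
    {k : ℕ} (p : Ω → ℝ) (U : Fin k → Ω → γ) (Y : Ω → δ) : ℝ :=
  (∑ i, condEntOf p (U i) Y) - condEntOf p (jointFin U) Y

/-- Joint random variable of a subfamily indexed by a finite set. -/
def jointOn {Ω γ ι : Type*} (U : ι → Ω → γ) (S : Finset ι) : Ω → (S → γ) :=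
  fun ω i => U i.1 ω

/-- Total correlation of the subfamily indexed by `S`. -/
noncomputable def totalCorrOn {Ω γ ι : Type*} [Fintype Ω] [DecidableEq ι] [Fintype γ] [DecidableEq γ]
    (p : Ω → ℝ) (U : ι → Ω → γ) (S : Finset ι) : ℝ :=
  (∑ i ∈ S, entOf p (U i)) - entOf p (jointOn U S)

/-- Conditional total correlation of the subfamily indexed by `S`, given `Y`. -/
noncomputable def condTotalCorrOn {Ω γ δ ι : Type*} [Fintype Ω] [DecidableEq ι]
    [Fintype γ] [DecidableEq γ] [Fintype δ] [DecidableEq δ]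
    (p : Ω → ℝ) (U : ι → Ω → γ) (Y : Ω → δ) (S : Finset ι) : ℝ :=
  (∑ i ∈ S, condEntOf p (U i) Y) - condEntOf p (jointOn U S) Y

section Helpers

variable {Ω : Type*} [Fintype Ω]

lemma pmass_nonneg {γ : Type*} [DecidableEq γ] {p : Ω → ℝ} (hp : ∀ ω, 0 ≤ p ω)
    (X : Ω → γ) (x : γ) : 0 ≤ pmassOf p X x :=
  Finset.sum_nonneg fun ω _ => by split; exacts [hp ω, le_rfl]

lemma pmass_sum {γ : Type*} [Fintype γ] [DecidableEq γ] (p : Ω → ℝ) (X : Ω → γ) :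
    ∑ x, pmassOf p X x = ∑ ω, p ω := by
  unfold pmassOf
  rw [Finset.sum_comm]
  simp

lemma pmass_fst {γ δ : Type*} [Fintype γ] [DecidableEq γ] [Fintype δ] [DecidableEq δ]
    (p : Ω → ℝ) (X : Ω → γ) (W : Ω → δ) (x : γ) :
    ∑ w, pmassOf p (fun ω => (X ω, W ω)) (x, w) = pmassOf p X x := by
  unfold pmassOf
  rw [Finset.sum_comm]
  apply Finset.sum_congr rfl
  intro ω _
  simp [Prod.ext_iff, ite_and]

lemma pmass_snd {γ δ : Type*} [Fintype γ] [DecidableEq γ] [Fintype δ] [DecidableEq δ]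
    (p : Ω → ℝ) (X : Ω → γ) (W : Ω → δ) (w : δ) :
    ∑ x, pmassOf p (fun ω => (X ω, W ω)) (x, w) = pmassOf p W w := by
  unfold pmassOf
  rw [Finset.sum_comm]
  apply Finset.sum_congr rfl
  intro ω _
  simp [Prod.ext_iff, ite_and]

lemma entOf_comp_inj {γ δ : Type*} [Fintype γ] [DecidableEq γ] [Fintype δ] [DecidableEq δ]
    (p : Ω → ℝ) (X : Ω → γ) (e : γ → δ) (he : Function.Injective e) :
    entOf p (fun ω => e (X ω)) = entOf p X := by
  unfold entOf
  congr 1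
  have h0 : ∀ y ∉ Finset.image e Finset.univ,
      pmassOf p (fun ω => e (X ω)) y * Real.log (pmassOf p (fun ω => e (X ω)) y) = 0 := by
    intro y hy
    have : pmassOf p (fun ω => e (X ω)) y = 0 := by
      unfold pmassOf
      apply Finset.sum_eq_zero
      intro ω _
      have : e (X ω) ≠ y := fun h => hy (Finset.mem_image.2 ⟨X ω, Finset.mem_univ _, h⟩)
      simp [this]
    simp [this]
  rw [← Finset.sum_subset (Finset.subset_univ (Finset.image e Finset.univ)) (fun y _ hy => h0 y hy),
    Finset.sum_image (fun a _ b _ h => he h)]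
  apply Finset.sum_congr rfl
  intro x _
  have : pmassOf p (fun ω => e (X ω)) (e x) = pmassOf p X x := by
    unfold pmassOf
    apply Finset.sum_congr rfl
    intro ω _
    simp [he.eq_iff]
  rw [this]

lemma entOf_congr {γ : Type*} [Fintype γ] [DecidableEq γ] (p : Ω → ℝ) {X X' : Ω → γ}
    (h : ∀ ω, X ω = X' ω) : entOf p X = entOf p X' := by
  have : X = X' := funext h
  rw [this]

/-- Key inequality: submodularity of entropy / nonnegativity of conditional mutual
information: `H(X,W,Z) + H(Z) ≤ H(X,Z) + H(W,Z)`. -/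
lemma ent_core {γ₁ γ₂ γ₃ : Type*} [Fintype γ₁] [DecidableEq γ₁] [Fintype γ₂] [DecidableEq γ₂]
    [Fintype γ₃] [DecidableEq γ₃] (p : Ω → ℝ) (hp : ∀ ω, 0 ≤ p ω) (hp1 : ∑ ω, p ω = 1)
    (X : Ω → γ₁) (W : Ω → γ₂) (Z : Ω → γ₃) :
    entOf p (fun ω => (X ω, (W ω, Z ω))) + entOf p Z ≤
      entOf p (fun ω => (X ω, Z ω)) + entOf p (fun ω => (W ω, Z ω)) := by
  classical
  set P : γ₁ × γ₂ × γ₃ → ℝ := pmassOf p (fun ω => (X ω, (W ω, Z ω))) with hPdef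
  set A : γ₁ × γ₃ → ℝ := pmassOf p (fun ω => (X ω, Z ω)) with hAdef
  set B : γ₂ × γ₃ → ℝ := pmassOf p (fun ω => (W ω, Z ω)) with hBdef
  set C : γ₃ → ℝ := pmassOf p Z with hCdef
  have hPnn : ∀ t, 0 ≤ P t := fun t => pmass_nonneg hp _ t
  have hAnn : ∀ t, 0 ≤ A t := fun t => pmass_nonneg hp _ t
  have hBnn : ∀ t, 0 ≤ B t := fun t => pmass_nonneg hp _ t
  have hCnn : ∀ t, 0 ≤ C t := fun t => pmass_nonneg hp _ t
  have mA : ∀ x z, ∑ w, P (x, (w, z)) = A (x, z) := by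
    intro x z
    rw [hPdef, hAdef]
    unfold pmassOf
    rw [Finset.sum_comm]
    apply Finset.sum_congr rfl
    intro ω _
    simp [Prod.ext_iff, ite_and]
  have mB : ∀ w z, ∑ x, P (x, (w, z)) = B (w, z) := by
    intro w z
    rw [hPdef, hBdef]
    unfold pmassOf
    rw [Finset.sum_comm]
    apply Finset.sum_congr rfl
    intro ω _
    simp [Prod.ext_iff, ite_and]
  have mAC : ∀ z, ∑ x, A (x, z) = C z := by
    intro z
    rw [hAdef, hCdef]
    unfold pmassOf
    rw [Finset.sum_comm]
    apply Finset.sum_congr rfl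
    intro ω _
    simp [Prod.ext_iff, ite_and]
  have mBC : ∀ z, ∑ w, B (w, z) = C z := by
    intro z
    rw [hBdef, hCdef]
    unfold pmassOf
    rw [Finset.sum_comm]
    apply Finset.sum_congr rfl
    intro ω _
    simp [Prod.ext_iff, ite_and]
  have ePsum : ∑ t, P t = 1 := by rw [hPdef, pmass_sum, hp1]
  have eCsum : ∑ z, C z = 1 := by rw [hCdef, pmass_sum, hp1]
  -- the pointwise Gibbs-type inequality
  have key : ∀ t : γ₁ × γ₂ × γ₃,
      P t * Real.log (A (t.1, t.2.2)) + P t * Real.log (B (t.2.1, t.2.2))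
        - P t * Real.log (C t.2.2) - P t * Real.log (P t)
      ≤ (if C t.2.2 = 0 then 0 else A (t.1, t.2.2) * B (t.2.1, t.2.2) / C t.2.2) - P t := by
    rintro ⟨x, w, z⟩
    dsimp only
    rcases eq_or_lt_of_le (hPnn (x, (w, z))) with h0 | hpos
    · rw [← h0]
      have hq : (0:ℝ) ≤ (if C z = 0 then 0 else A (x, z) * B (w, z) / C z) := by
        split
        · exact le_rfl
        · exact div_nonneg (mul_nonneg (hAnn _) (hBnn _)) (hCnn _)
      simp only [zero_mul]
      linarith
    · have hPA : P (x, (w, z)) ≤ A (x, z) := by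
        rw [← mA x z]
        exact Finset.single_le_sum (f := fun w' => P (x, (w', z))) (fun w' _ => hPnn _) (Finset.mem_univ w)
      have hPB : P (x, (w, z)) ≤ B (w, z) := by
        rw [← mB w z]
        exact Finset.single_le_sum (f := fun x' => P (x', (w, z))) (fun x' _ => hPnn _) (Finset.mem_univ x)
      have hAC : A (x, z) ≤ C z := by
        rw [← mAC z]
        exact Finset.single_le_sum (f := fun x' => A (x', z)) (fun x' _ => hAnn _) (Finset.mem_univ x)
      have hA0 : 0 < A (x, z) := lt_of_lt_of_le hpos hPA
      have hB0 : 0 < B (w, z) := lt_of_lt_of_le hpos hPB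
      have hC0 : 0 < C z := lt_of_lt_of_le hA0 hAC
      rw [if_neg (ne_of_gt hC0)]
      have hq : (0:ℝ) < A (x, z) * B (w, z) / (C z * P (x, (w, z))) := by positivity
      have hlog := Real.log_le_sub_one_of_pos hq
      have hexp : Real.log (A (x, z) * B (w, z) / (C z * P (x, (w, z))))
          = Real.log (A (x, z)) + Real.log (B (w, z)) - Real.log (C z)
            - Real.log (P (x, (w, z))) := by
        rw [Real.log_div (by positivity) (by positivity),
          Real.log_mul (ne_of_gt hA0) (ne_of_gt hB0),
          Real.log_mul (ne_of_gt hC0) (ne_of_gt hpos)]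
        ring
      have h2 : P (x, (w, z)) * Real.log (A (x, z) * B (w, z) / (C z * P (x, (w, z))))
          ≤ P (x, (w, z)) * (A (x, z) * B (w, z) / (C z * P (x, (w, z))) - 1) :=
        mul_le_mul_of_nonneg_left hlog (le_of_lt hpos)
      have h3 : P (x, (w, z)) * (A (x, z) * B (w, z) / (C z * P (x, (w, z))) - 1)
          = A (x, z) * B (w, z) / C z - P (x, (w, z)) := by
        field_simp
      rw [hexp] at h2
      have h4 : P (x, (w, z)) * (Real.log (A (x, z)) + Real.log (B (w, z)) - Real.log (C z)
          - Real.log (P (x, (w, z))))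
          = P (x, (w, z)) * Real.log (A (x, z)) + P (x, (w, z)) * Real.log (B (w, z))
            - P (x, (w, z)) * Real.log (C z) - P (x, (w, z)) * Real.log (P (x, (w, z))) := by
        ring
      linarith
  -- sum the key inequality over all triples
  have hsum : ∑ t : γ₁ × γ₂ × γ₃,
      (P t * Real.log (A (t.1, t.2.2)) + P t * Real.log (B (t.2.1, t.2.2))
        - P t * Real.log (C t.2.2) - P t * Real.log (P t))
      ≤ ∑ t : γ₁ × γ₂ × γ₃,
        ((if C t.2.2 = 0 then 0 else A (t.1, t.2.2) * B (t.2.1, t.2.2) / C t.2.2) - P t) :=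
    Finset.sum_le_sum (fun t _ => key t)
  -- identify the four entropy-type sums
  have eA : ∑ t : γ₁ × γ₂ × γ₃, P t * Real.log (A (t.1, t.2.2))
      = ∑ s : γ₁ × γ₃, A s * Real.log (A s) := by
    simp_rw [Fintype.sum_prod_type]
    refine Finset.sum_congr rfl fun x _ => ?_
    rw [Finset.sum_comm]
    refine Finset.sum_congr rfl fun z _ => ?_
    rw [← Finset.sum_mul, mA]
  have eB : ∑ t : γ₁ × γ₂ × γ₃, P t * Real.log (B (t.2.1, t.2.2))
      = ∑ s : γ₂ × γ₃, B s * Real.log (B s) := by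
    simp_rw [Fintype.sum_prod_type]
    rw [Finset.sum_comm]
    refine Finset.sum_congr rfl fun w _ => ?_
    rw [Finset.sum_comm]
    refine Finset.sum_congr rfl fun z _ => ?_
    rw [← Finset.sum_mul, mB]
  have eC : ∑ t : γ₁ × γ₂ × γ₃, P t * Real.log (C t.2.2)
      = ∑ z, C z * Real.log (C z) := by
    simp_rw [Fintype.sum_prod_type]
    have h1 : ∀ x, ∑ w, ∑ z, P (x, (w, z)) * Real.log (C z)
        = ∑ z, A (x, z) * Real.log (C z) := by
      intro x
      rw [Finset.sum_comm]
      refine Finset.sum_congr rfl fun z _ => ?_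
      rw [← Finset.sum_mul, mA]
    simp_rw [h1]
    rw [Finset.sum_comm]
    refine Finset.sum_congr rfl fun z _ => ?_
    rw [← Finset.sum_mul, mAC]
  have eQ : ∑ t : γ₁ × γ₂ × γ₃,
      (if C t.2.2 = 0 then 0 else A (t.1, t.2.2) * B (t.2.1, t.2.2) / C t.2.2) ≤ 1 := by
    simp_rw [Fintype.sum_prod_type]
    have hz : ∀ x, ∑ w, ∑ z, (if C z = 0 then 0 else A (x, z) * B (w, z) / C z)
        = ∑ z, (if C z = 0 then 0 else A (x, z) * C z / C z) := by
      intro x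
      rw [Finset.sum_comm]
      apply Finset.sum_congr rfl
      intro z _
      by_cases h : C z = 0
      · simp [h]
      · simp only [if_neg h]
        rw [← Finset.sum_div, ← Finset.mul_sum, mBC]
    simp_rw [hz]
    rw [Finset.sum_comm]
    have hz2 : ∀ z, ∑ x, (if C z = 0 then 0 else A (x, z) * C z / C z)
        = (if C z = 0 then 0 else C z) := by
      intro z
      by_cases h : C z = 0
      · simp [h]
      · simp only [if_neg h]
        rw [← Finset.sum_div, ← Finset.sum_mul, mAC, mul_div_assoc, div_self h, mul_one]
    simp_rw [hz2]
    calc ∑ z, (if C z = 0 then 0 else C z) ≤ ∑ z, C z := by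
          apply Finset.sum_le_sum
          intro z _
          by_cases h : C z = 0
          · rw [if_pos h, h]
          · rw [if_neg h]
      _ = 1 := eCsum
  -- put everything together
  have hLHS : ∑ t : γ₁ × γ₂ × γ₃,
      (P t * Real.log (A (t.1, t.2.2)) + P t * Real.log (B (t.2.1, t.2.2))
        - P t * Real.log (C t.2.2) - P t * Real.log (P t))
      = (∑ s : γ₁ × γ₃, A s * Real.log (A s)) + (∑ s : γ₂ × γ₃, B s * Real.log (B s))
        - (∑ z, C z * Real.log (C z)) - ∑ t, P t * Real.log (P t) := by
    rw [← eA, ← eB, ← eC]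
    rw [← Finset.sum_add_distrib, ← Finset.sum_sub_distrib, ← Finset.sum_sub_distrib]
  have hRHS : ∑ t : γ₁ × γ₂ × γ₃,
      ((if C t.2.2 = 0 then 0 else A (t.1, t.2.2) * B (t.2.1, t.2.2) / C t.2.2) - P t)
      ≤ 0 := by
    rw [Finset.sum_sub_distrib, ePsum]
    linarith
  rw [hLHS] at hsum
  have hfinal : (∑ s : γ₁ × γ₃, A s * Real.log (A s)) + (∑ s : γ₂ × γ₃, B s * Real.log (B s))
      - (∑ z, C z * Real.log (C z)) - (∑ t, P t * Real.log (P t)) ≤ 0 :=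
    le_trans hsum hRHS
  show (-∑ t, P t * Real.log (P t)) + (-∑ z, C z * Real.log (C z))
      ≤ (-∑ s, A s * Real.log (A s)) + (-∑ s, B s * Real.log (B s))
  linarith

section Relabel

variable {γ δ ι : Type*} [Fintype γ] [DecidableEq γ] [Fintype δ] [DecidableEq δ] [DecidableEq ι]

lemma entOf_joint_empty_pair (p : Ω → ℝ) (U : ι → Ω → γ) (Y : Ω → δ) :
    entOf p (fun ω => (jointOn U (∅ : Finset ι) ω, Y ω)) = entOf p Y := by
  have he : Function.Injective
      (fun y => ((fun i => absurd i.2 (Finset.notMem_empty i.1), y) :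
        ((↥(∅ : Finset ι)) → γ) × δ)) := by
    intro a b h
    exact (Prod.ext_iff.1 h).2
  rw [← entOf_comp_inj p Y _ he]
  apply entOf_congr
  intro ω
  refine Prod.ext ?_ rfl
  funext i
  exact absurd i.2 (Finset.notMem_empty i.1)

lemma entOf_swap_pair {γ' δ' : Type*} [Fintype γ'] [DecidableEq γ'] [Fintype δ'] [DecidableEq δ']
    (p : Ω → ℝ) (X : Ω → γ') (Y : Ω → δ') :
    entOf p (fun ω => (X ω, Y ω)) = entOf p (fun ω => (Y ω, X ω)) := by
  exact (entOf_comp_inj p (fun ω => (X ω, Y ω)) Prod.swap Prod.swap_injective).symm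

lemma entOf_joint_insert_pair (p : Ω → ℝ) (U : ι → Ω → γ) (Y : Ω → δ)
    {S : Finset ι} {u : ι} (hu : u ∉ S) :
    entOf p (fun ω => (jointOn U (insert u S) ω, Y ω))
      = entOf p (fun ω => (U u ω, (Y ω, jointOn U S ω))) := by
  have he : Function.Injective
      (fun (g : (↥(insert u S) → γ) × δ) =>
        ((g.1 ⟨u, Finset.mem_insert_self u S⟩,
          (g.2, fun i => g.1 ⟨i.1, Finset.mem_insert_of_mem i.2⟩)) :
        γ × (δ × ((↥S) → γ)))) := by
    intro a b h
    obtain ⟨h1, h2, h3⟩ : _ ∧ _ ∧ _ :=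
      ⟨(Prod.ext_iff.1 h).1, (Prod.ext_iff.1 (Prod.ext_iff.1 h).2).1,
        (Prod.ext_iff.1 (Prod.ext_iff.1 h).2).2⟩
    refine Prod.ext ?_ h2
    funext i
    rcases Finset.mem_insert.1 i.2 with hiu | hiS
    · have : i = ⟨u, Finset.mem_insert_self u S⟩ := Subtype.ext hiu
      rw [this]
      exact h1
    · have : i = ⟨(⟨i.1, hiS⟩ : ↥S).1, Finset.mem_insert_of_mem (⟨i.1, hiS⟩ : ↥S).2⟩ :=
        Subtype.ext rfl
      rw [this]
      exact congrFun h3 ⟨i.1, hiS⟩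
  exact (entOf_comp_inj p (fun ω => (jointOn U (insert u S) ω, Y ω)) _ he).symm

lemma entOf_joint_insert (p : Ω → ℝ) (U : ι → Ω → γ) {S : Finset ι} {u : ι} (hu : u ∉ S) :
    entOf p (jointOn U (insert u S))
      = entOf p (fun ω => (U u ω, jointOn U S ω)) := by
  have he : Function.Injective
      (fun (g : ↥(insert u S) → γ) =>
        ((g ⟨u, Finset.mem_insert_self u S⟩,
          fun i => g ⟨i.1, Finset.mem_insert_of_mem i.2⟩) :
        γ × ((↥S) → γ))) := by
    intro a b h
    obtain ⟨h1, h3⟩ := Prod.ext_iff.1 h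
    funext i
    rcases Finset.mem_insert.1 i.2 with hiu | hiS
    · have : i = ⟨u, Finset.mem_insert_self u S⟩ := Subtype.ext hiu
      rw [this]
      exact h1
    · have : i = ⟨(⟨i.1, hiS⟩ : ↥S).1, Finset.mem_insert_of_mem (⟨i.1, hiS⟩ : ↥S).2⟩ :=
        Subtype.ext rfl
      rw [this]
      exact congrFun h3 ⟨i.1, hiS⟩
  exact (entOf_comp_inj p (jointOn U (insert u S)) _ he).symm

lemma entOf_joint_split (p : Ω → ℝ) (U : ι → Ω → γ) {S T : Finset ι} (hST : S ⊆ T) :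
    entOf p (jointOn U T)
      = entOf p (fun ω => (jointOn U (T \ S) ω, jointOn U S ω)) := by
  classical
  have he : Function.Injective
      (fun (g : ↥T → γ) =>
        (((fun i => g ⟨i.1, (Finset.sdiff_subset) i.2⟩),
          (fun i => g ⟨i.1, hST i.2⟩)) :
        ((↥(T \ S)) → γ) × ((↥S) → γ))) := by
    intro a b h
    obtain ⟨h1, h2⟩ := Prod.ext_iff.1 h
    funext i
    by_cases hiS : i.1 ∈ S
    · have : i = ⟨(⟨i.1, hiS⟩ : ↥S).1, hST (⟨i.1, hiS⟩ : ↥S).2⟩ := Subtype.ext rfl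
      rw [this]
      exact congrFun h2 ⟨i.1, hiS⟩
    · have hid : i.1 ∈ T \ S := Finset.mem_sdiff.2 ⟨i.2, hiS⟩
      have : i = ⟨(⟨i.1, hid⟩ : ↥(T \ S)).1, Finset.sdiff_subset (⟨i.1, hid⟩ : ↥(T \ S)).2⟩ :=
        Subtype.ext rfl
      rw [this]
      exact congrFun h1 ⟨i.1, hid⟩
  exact (entOf_comp_inj p (jointOn U T) _ he).symm

lemma entOf_joint_insert_split (p : Ω → ℝ) (U : ι → Ω → γ) {S T : Finset ι}
    {u : ι} (hST : S ⊆ T) (hu : u ∉ T) :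
    entOf p (jointOn U (insert u T))
      = entOf p (fun ω => (U u ω, (jointOn U (T \ S) ω, jointOn U S ω))) := by
  rw [entOf_joint_insert p U hu]
  have he : Function.Injective
      (fun (y : γ × (↥T → γ)) =>
        ((y.1, ((fun i => y.2 ⟨i.1, Finset.sdiff_subset i.2⟩),
          (fun i => y.2 ⟨i.1, hST i.2⟩))) :
        γ × (((↥(T \ S)) → γ) × ((↥S) → γ)))) := by
    intro a b h
    obtain ⟨h1, h2⟩ := Prod.ext_iff.1 h
    obtain ⟨h3, h4⟩ := Prod.ext_iff.1 h2
    refine Prod.ext h1 ?_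
    funext i
    by_cases hiS : i.1 ∈ S
    · have : i = ⟨(⟨i.1, hiS⟩ : ↥S).1, hST (⟨i.1, hiS⟩ : ↥S).2⟩ := Subtype.ext rfl
      rw [this]
      exact congrFun h4 ⟨i.1, hiS⟩
    · have hid : i.1 ∈ T \ S := Finset.mem_sdiff.2 ⟨i.2, hiS⟩
      have : i = ⟨(⟨i.1, hid⟩ : ↥(T \ S)).1, Finset.sdiff_subset (⟨i.1, hid⟩ : ↥(T \ S)).2⟩ :=
        Subtype.ext rfl
      rw [this]
      exact congrFun h3 ⟨i.1, hid⟩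
  exact (entOf_comp_inj p (fun ω => (U u ω, jointOn U T ω)) _ he).symm

end Relabel

end Helpers

/-- Under conditional independence given Y, the information-theoretic diversity
𝓘(U_S|Y) − 𝓘(U_S) equals −𝓘(U_S), and S ↦ −𝓘(U_S) is submodular. -/
theorem diversity_eq_neg_totalCorr_and_submodular {Ω α β ι : Type*}
    [Fintype Ω] [Fintype ι] [DecidableEq ι]
    [Fintype α] [DecidableEq α] [Fintype β] [DecidableEq β]
    (p : Ω → ℝ) (hp : ∀ ω, 0 ≤ p ω) (hp1 : ∑ ω, p ω = 1)
    (U : ι → Ω → α) (Y : Ω → β)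
    (hci : ∀ (S : Finset ι) (u : ι), u ∉ S →
      condEntOf p (U u) (fun ω => (Y ω, jointOn U S ω)) = condEntOf p (U u) Y) :
    (∀ S : Finset ι,
      condTotalCorrOn p U Y S - totalCorrOn p U S = -totalCorrOn p U S) ∧
    (∀ (S T : Finset ι) (u : ι), S ⊆ T → u ∉ T →
      (-totalCorrOn p U (insert u T)) - (-totalCorrOn p U T) ≤
        (-totalCorrOn p U (insert u S)) - (-totalCorrOn p U S)) := by
  classical
  have part1 : ∀ S : Finset ι, condTotalCorrOn p U Y S = 0 := by
    intro S
    induction S using Finset.induction_on with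
    | empty =>
      simp only [condTotalCorrOn, condEntOf]
      rw [Finset.sum_empty, entOf_joint_empty_pair p U Y]
      ring
    | @insert a s ha ih =>
      have hjoint : entOf p (fun ω => (jointOn U (insert a s) ω, Y ω))
          = entOf p (fun ω => (U a ω, (Y ω, jointOn U s ω))) :=
        entOf_joint_insert_pair p U Y ha
      have hswap : entOf p (fun ω => (Y ω, jointOn U s ω))
          = entOf p (fun ω => (jointOn U s ω, Y ω)) :=
        entOf_swap_pair p Y (jointOn U s)
      have hc := hci s a ha
      simp only [condTotalCorrOn, condEntOf] at ih hc ⊢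
      rw [Finset.sum_insert ha]
      linarith [ih, hc, hjoint, hswap]
  refine ⟨fun S => by rw [part1 S]; ring, ?_⟩
  intro S T u hST huT
  have huS : u ∉ S := fun h => huT (hST h)
  have core := ent_core p hp hp1 (U u) (jointOn U (T \ S)) (jointOn U S)
  have h1 : entOf p (jointOn U (insert u T))
      = entOf p (fun ω => (U u ω, (jointOn U (T \ S) ω, jointOn U S ω))) :=
    entOf_joint_insert_split p U hST huT
  have h2 : entOf p (jointOn U T)
      = entOf p (fun ω => (jointOn U (T \ S) ω, jointOn U S ω)) :=
    entOf_joint_split p U hST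
  have h3 : entOf p (jointOn U (insert u S))
      = entOf p (fun ω => (U u ω, jointOn U S ω)) := entOf_joint_insert p U huS
  simp only [totalCorrOn]
  rw [Finset.sum_insert huT, Finset.sum_insert huS]
  linarith [core, h1, h2, h3]
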